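/- Soliton solution: Let a ∈ ℝ and set X = x + 4t + a, u(x,t) = 2/cosh²(X), y(x,t) = 2(1 − x·tanh X)·tanh X. Then (u,y) satisfies both equations of system (Dx) and both equations of system (Dt) on ℝ × ℝ, and the first integrals take the values H0 = 2y y_xx − y_x² + 4u y² = −4 and H1 = 2z z_xx − z_x² + 4(u−1)z² = −16, where z = 12tu + 2x + y. -/

import Mathlib

/-- Partial derivative in the first (space) variable. -/
noncomputable def dx (f : ℝ → ℝ → ℝ) : ℝ → ℝ → ℝ := fun x t => deriv (fun x' => f x' t) x

/-- Partial derivative in the second (time) variable. -/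
noncomputable def dt (f : ℝ → ℝ → ℝ) : ℝ → ℝ → ℝ := fun x t => deriv (fun t' => f x t') t

/-- The KdV equation `u_t = u_xxx + 6 u u_x`. -/
def KdV (u : ℝ → ℝ → ℝ) : Prop :=
  ∀ x t, dt u x t = dx (dx (dx u)) x t + 6 * u x t * dx u x t

/-- `v` is the potential of `u`: `v_x = u`, `v_t = u_xx + 3 u²`. -/
def Potential (u v : ℝ → ℝ → ℝ) : Prop :=
  ∀ x t, dx v x t = u x t ∧ dt v x t = dx (dx u) x t + 3 * (u x t) ^ 2

/-- Equation (eqt): the stationary equation for the linear combination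
`u_{τ5} + k1 u_{τ3} + k2 u_{τ1}` of nonautonomous symmetries of KdV. -/
def Eqt (k1 k2 : ℝ) (u v : ℝ → ℝ → ℝ) : Prop :=
  ∀ x t,
    3 * t * dx (fun x t => dx (dx (dx (dx u))) x t + 10 * u x t * dx (dx u) x t
        + 5 * (dx u x t) ^ 2 + 10 * (u x t) ^ 3) x t
    + x * dx (fun x t => dx (dx u) x t + 3 * (u x t) ^ 2) x t
    + 4 * dx (dx u) x t + 8 * (u x t) ^ 2 + 2 * dx u x t * v x t
    + k1 * (3 * t * dx (fun x t => dx (dx u) x t + 3 * (u x t) ^ 2) x t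
        + x * dx u x t + 2 * u x t)
    + k2 * (6 * t * dx u x t + 1) = 0

/-- Pointwise form of system (Dx): the stationary equation and the equation for `y`. -/
def DxEqAt (u y : ℝ → ℝ → ℝ) (x t : ℝ) : Prop :=
  3 * t * (dx (dx (dx u)) x t + 6 * u x t * dx u x t - 4 * dx u x t)
      + x * dx u x t + 2 * u x t - dx y x t - 2 = 0 ∧
  dx (dx (dx y)) x t + 4 * u x t * dx y x t + 2 * dx u x t * y x t = 0

/-- Pointwise form of system (Dt): the KdV flow for `u` and the induced flow for `y`. -/
def DtEqAt (u y : ℝ → ℝ → ℝ) (x t : ℝ) : Prop :=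
  dt u x t = dx (dx (dx u)) x t + 6 * u x t * dx u x t ∧
  dt y x t = 2 * u x t * dx y x t - 2 * dx u x t * y x t

/-- The first integral `H0 = 2 y y_xx - y_x² + 4 u y²`. -/
noncomputable def H0expr (u y : ℝ → ℝ → ℝ) : ℝ → ℝ → ℝ := fun x t =>
  2 * y x t * dx (dx y) x t - (dx y x t) ^ 2 + 4 * u x t * (y x t) ^ 2

/-- The function `z = 12 t u + 2 x + y`. -/
noncomputable def zfun (u y : ℝ → ℝ → ℝ) : ℝ → ℝ → ℝ := fun x t =>
  12 * t * u x t + 2 * x + y x t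

/-- The first integral `H1 = 2 z z_xx - z_x² + 4 (u - 1) z²` with `z = 12 t u + 2 x + y`. -/
noncomputable def H1expr (u y : ℝ → ℝ → ℝ) : ℝ → ℝ → ℝ := fun x t =>
  2 * zfun u y x t * dx (dx (zfun u y)) x t - (dx (zfun u y) x t) ^ 2
    + 4 * (u x t - 1) * (zfun u y x t) ^ 2


/-- `S = tanh (x + 4t + a)`. -/
noncomputable def Sfn (a : ℝ) : ℝ → ℝ → ℝ := fun x t => Real.tanh (x + 4 * t + a)

lemma tanh_hasDerivAt (w : ℝ) : HasDerivAt Real.tanh (1 - Real.tanh w ^ 2) w := by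
  have h := (Real.hasDerivAt_sinh w).div (Real.hasDerivAt_cosh w) (Real.cosh_pos w).ne'
  have hfun : (fun y => Real.sinh y / Real.cosh y) = Real.tanh := by
    funext y; rw [Real.tanh_eq_sinh_div_cosh]
  rw [show (Real.sinh / Real.cosh) = (fun y => Real.sinh y / Real.cosh y) from rfl, hfun] at h
  refine h.congr_deriv ?_
  rw [Real.tanh_eq_sinh_div_cosh]
  have hc := (Real.cosh_pos w).ne'
  field_simp

lemma hSx (a t x : ℝ) : HasDerivAt (fun x' => Sfn a x' t) (1 - Sfn a x t ^ 2) x := by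
  have h1 : HasDerivAt (fun x' : ℝ => x' + 4 * t + a) 1 x := by
    simpa using ((hasDerivAt_id x).add_const (4 * t)).add_const a
  have h2 := (tanh_hasDerivAt (x + 4 * t + a)).comp x h1
  simpa [Sfn, Function.comp_def] using h2

lemma hSt (a x t : ℝ) : HasDerivAt (fun t' => Sfn a x t') ((1 - Sfn a x t ^ 2) * 4) t := by
  have h1 : HasDerivAt (fun t' : ℝ => x + 4 * t' + a) 4 t := by
    have := (((hasDerivAt_id t).const_mul (4 : ℝ)).const_add x).add_const a
    simpa using this
  have h2 := (tanh_hasDerivAt (x + 4 * t + a)).comp t h1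
  simpa [Sfn, Function.comp_def] using h2

lemma hD (a t x p0 q0 p1 q1 p2 q2 p3 q3 p4 q4 : ℝ) :
    HasDerivAt (fun x' : ℝ => p0 + q0 * x' + (p1 + q1 * x') * Sfn a x' t
        + (p2 + q2 * x') * Sfn a x' t ^ 2 + (p3 + q3 * x') * Sfn a x' t ^ 3
        + (p4 + q4 * x') * Sfn a x' t ^ 4)
      (q0 + q1 * Sfn a x t + q2 * Sfn a x t ^ 2 + q3 * Sfn a x t ^ 3 + q4 * Sfn a x t ^ 4
        + ((p1 + q1 * x) + 2 * (p2 + q2 * x) * Sfn a x t + 3 * (p3 + q3 * x) * Sfn a x t ^ 2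
          + 4 * (p4 + q4 * x) * Sfn a x t ^ 3) * (1 - Sfn a x t ^ 2)) x := by
  have hs := hSx a t x
  have lin : ∀ p q : ℝ, HasDerivAt (fun x' : ℝ => p + q * x') q x := by
    intro p q; simpa using ((hasDerivAt_id x).const_mul q).const_add p
  have h := ((((lin p0 q0).add ((lin p1 q1).mul hs)).add
      ((lin p2 q2).mul (hs.pow 2))).add ((lin p3 q3).mul (hs.pow 3))).add
      ((lin p4 q4).mul (hs.pow 4))
  refine h.congr_deriv ?_
  simp only [Pi.pow_apply]
  push_cast
  ring

lemma hDt (a x t c0 c1 c2 c3 c4 : ℝ) :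
    HasDerivAt (fun t' : ℝ => c0 + c1 * Sfn a x t' + c2 * Sfn a x t' ^ 2
        + c3 * Sfn a x t' ^ 3 + c4 * Sfn a x t' ^ 4)
      ((c1 + 2 * c2 * Sfn a x t + 3 * c3 * Sfn a x t ^ 2 + 4 * c4 * Sfn a x t ^ 3)
        * ((1 - Sfn a x t ^ 2) * 4)) t := by
  have hs := hSt a x t
  have h := ((((hasDerivAt_const t c0).add ((hasDerivAt_const t c1).mul hs)).add
      (((hasDerivAt_const t c2)).mul (hs.pow 2))).add
      (((hasDerivAt_const t c3)).mul (hs.pow 3))).add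
      (((hasDerivAt_const t c4)).mul (hs.pow 4))
  refine h.congr_deriv ?_
  simp only [Pi.pow_apply]
  push_cast
  ring

lemma dlem1 (a : ℝ) : dx (fun x t => 2 + (-2) * Sfn a x t ^ 2) = fun x t => (-4) * Sfn a x t + 4 * Sfn a x t ^ 3 := by
  funext x t
  simp only [dx]
  have h := hD a t x (2) (0) (0) (0) ((-2)) (0) (0) (0) (0) (0)
  have e : (fun x' => 2 + (-2) * Sfn a x' t ^ 2) = (fun x' : ℝ => (2) + (0) * x' + ((0) + (0) * x') * Sfn a x' t + (((-2)) + (0) * x') * Sfn a x' t ^ 2 + ((0) + (0) * x') * Sfn a x' t ^ 3 + ((0) + (0) * x') * Sfn a x' t ^ 4) := by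
    funext x'; ring
  rw [e, h.deriv]; ring

lemma dlem2 (a : ℝ) : dx (fun x t => (-4) * Sfn a x t + 4 * Sfn a x t ^ 3) = fun x t => (-4) + 16 * Sfn a x t ^ 2 + (-12) * Sfn a x t ^ 4 := by
  funext x t
  simp only [dx]
  have h := hD a t x (0) (0) ((-4)) (0) (0) (0) (4) (0) (0) (0)
  have e : (fun x' => (-4) * Sfn a x' t + 4 * Sfn a x' t ^ 3) = (fun x' : ℝ => (0) + (0) * x' + (((-4)) + (0) * x') * Sfn a x' t + ((0) + (0) * x') * Sfn a x' t ^ 2 + ((4) + (0) * x') * Sfn a x' t ^ 3 + ((0) + (0) * x') * Sfn a x' t ^ 4) := by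
    funext x'; ring
  rw [e, h.deriv]; ring

lemma dlem3 (a : ℝ) : dx (fun x t => (-4) + 16 * Sfn a x t ^ 2 + (-12) * Sfn a x t ^ 4) = fun x t => 32 * Sfn a x t + (-80) * Sfn a x t ^ 3 + 48 * Sfn a x t ^ 5 := by
  funext x t
  simp only [dx]
  have h := hD a t x ((-4)) (0) (0) (0) (16) (0) (0) (0) ((-12)) (0)
  have e : (fun x' => (-4) + 16 * Sfn a x' t ^ 2 + (-12) * Sfn a x' t ^ 4) = (fun x' : ℝ => ((-4)) + (0) * x' + ((0) + (0) * x') * Sfn a x' t + ((16) + (0) * x') * Sfn a x' t ^ 2 + ((0) + (0) * x') * Sfn a x' t ^ 3 + (((-12)) + (0) * x') * Sfn a x' t ^ 4) := by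
    funext x'; ring
  rw [e, h.deriv]; ring

lemma dlem4 (a : ℝ) : dx (fun x t => 2 * Sfn a x t + (-2) * x * Sfn a x t ^ 2) = fun x t => 2 + (-4) * Sfn a x t ^ 2 + (-4) * x * Sfn a x t + 4 * x * Sfn a x t ^ 3 := by
  funext x t
  simp only [dx]
  have h := hD a t x (0) (0) (2) (0) (0) ((-2)) (0) (0) (0) (0)
  have e : (fun x' => 2 * Sfn a x' t + (-2) * x' * Sfn a x' t ^ 2) = (fun x' : ℝ => (0) + (0) * x' + ((2) + (0) * x') * Sfn a x' t + ((0) + ((-2)) * x') * Sfn a x' t ^ 2 + ((0) + (0) * x') * Sfn a x' t ^ 3 + ((0) + (0) * x') * Sfn a x' t ^ 4) := by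
    funext x'; ring
  rw [e, h.deriv]; ring

lemma dlem5 (a : ℝ) : dx (fun x t => 2 + (-4) * Sfn a x t ^ 2 + (-4) * x * Sfn a x t + 4 * x * Sfn a x t ^ 3) = fun x t => (-12) * Sfn a x t + 12 * Sfn a x t ^ 3 + (-4) * x + 16 * x * Sfn a x t ^ 2 + (-12) * x * Sfn a x t ^ 4 := by
  funext x t
  simp only [dx]
  have h := hD a t x (2) (0) (0) ((-4)) ((-4)) (0) (0) (4) (0) (0)
  have e : (fun x' => 2 + (-4) * Sfn a x' t ^ 2 + (-4) * x' * Sfn a x' t + 4 * x' * Sfn a x' t ^ 3) = (fun x' : ℝ => (2) + (0) * x' + ((0) + ((-4)) * x') * Sfn a x' t + (((-4)) + (0) * x') * Sfn a x' t ^ 2 + ((0) + (4) * x') * Sfn a x' t ^ 3 + ((0) + (0) * x') * Sfn a x' t ^ 4) := by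
    funext x'; ring
  rw [e, h.deriv]; ring

lemma dlem6 (a : ℝ) : dx (fun x t => (-12) * Sfn a x t + 12 * Sfn a x t ^ 3 + (-4) * x + 16 * x * Sfn a x t ^ 2 + (-12) * x * Sfn a x t ^ 4) = fun x t => (-16) + 64 * Sfn a x t ^ 2 + (-48) * Sfn a x t ^ 4 + 32 * x * Sfn a x t + (-80) * x * Sfn a x t ^ 3 + 48 * x * Sfn a x t ^ 5 := by
  funext x t
  simp only [dx]
  have h := hD a t x (0) ((-4)) ((-12)) (0) (0) (16) (12) (0) (0) ((-12))
  have e : (fun x' => (-12) * Sfn a x' t + 12 * Sfn a x' t ^ 3 + (-4) * x' + 16 * x' * Sfn a x' t ^ 2 + (-12) * x' * Sfn a x' t ^ 4) = (fun x' : ℝ => (0) + ((-4)) * x' + (((-12)) + (0) * x') * Sfn a x' t + ((0) + (16) * x') * Sfn a x' t ^ 2 + ((12) + (0) * x') * Sfn a x' t ^ 3 + ((0) + ((-12)) * x') * Sfn a x' t ^ 4) := by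
    funext x'; ring
  rw [e, h.deriv]; ring

lemma dlem7 (a : ℝ) : dx (fun x t => 2 * Sfn a x t + 24 * t + (-24) * t * Sfn a x t ^ 2 + 2 * x + (-2) * x * Sfn a x t ^ 2) = fun x t => 4 + (-4) * Sfn a x t ^ 2 + (-48) * t * Sfn a x t + 48 * t * Sfn a x t ^ 3 + (-4) * x * Sfn a x t + 4 * x * Sfn a x t ^ 3 := by
  funext x t
  simp only [dx]
  have h := hD a t x (24 * t) (2) (2) (0) ((-24) * t) ((-2)) (0) (0) (0) (0)
  have e : (fun x' => 2 * Sfn a x' t + 24 * t + (-24) * t * Sfn a x' t ^ 2 + 2 * x' + (-2) * x' * Sfn a x' t ^ 2) = (fun x' : ℝ => (24 * t) + (2) * x' + ((2) + (0) * x') * Sfn a x' t + (((-24) * t) + ((-2)) * x') * Sfn a x' t ^ 2 + ((0) + (0) * x') * Sfn a x' t ^ 3 + ((0) + (0) * x') * Sfn a x' t ^ 4) := by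
    funext x'; ring
  rw [e, h.deriv]; ring

lemma dlem8 (a : ℝ) : dx (fun x t => 4 + (-4) * Sfn a x t ^ 2 + (-48) * t * Sfn a x t + 48 * t * Sfn a x t ^ 3 + (-4) * x * Sfn a x t + 4 * x * Sfn a x t ^ 3) = fun x t => (-12) * Sfn a x t + 12 * Sfn a x t ^ 3 + (-48) * t + 192 * t * Sfn a x t ^ 2 + (-144) * t * Sfn a x t ^ 4 + (-4) * x + 16 * x * Sfn a x t ^ 2 + (-12) * x * Sfn a x t ^ 4 := by
  funext x t
  simp only [dx]
  have h := hD a t x (4) (0) ((-48) * t) ((-4)) ((-4)) (0) (48 * t) (4) (0) (0)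
  have e : (fun x' => 4 + (-4) * Sfn a x' t ^ 2 + (-48) * t * Sfn a x' t + 48 * t * Sfn a x' t ^ 3 + (-4) * x' * Sfn a x' t + 4 * x' * Sfn a x' t ^ 3) = (fun x' : ℝ => (4) + (0) * x' + (((-48) * t) + ((-4)) * x') * Sfn a x' t + (((-4)) + (0) * x') * Sfn a x' t ^ 2 + ((48 * t) + (4) * x') * Sfn a x' t ^ 3 + ((0) + (0) * x') * Sfn a x' t ^ 4) := by
    funext x'; ring
  rw [e, h.deriv]; ring

lemma dlem9 (a : ℝ) : dt (fun x t => 2 + (-2) * Sfn a x t ^ 2) = fun x t => (-16) * Sfn a x t + 16 * Sfn a x t ^ 3 := by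
  funext x t
  simp only [dt]
  have h := hDt a x t (2) (0) ((-2)) (0) (0)
  have e : (fun t' => 2 + (-2) * Sfn a x t' ^ 2) = (fun t' : ℝ => (2) + (0) * Sfn a x t' + ((-2)) * Sfn a x t' ^ 2 + (0) * Sfn a x t' ^ 3 + (0) * Sfn a x t' ^ 4) := by
    funext t'; ring
  rw [e, h.deriv]; ring

lemma dlem10 (a : ℝ) : dt (fun x t => 2 * Sfn a x t + (-2) * x * Sfn a x t ^ 2) = fun x t => 8 + (-8) * Sfn a x t ^ 2 + (-16) * x * Sfn a x t + 16 * x * Sfn a x t ^ 3 := by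
  funext x t
  simp only [dt]
  have h := hDt a x t (0) (2) ((-2) * x) (0) (0)
  have e : (fun t' => 2 * Sfn a x t' + (-2) * x * Sfn a x t' ^ 2) = (fun t' : ℝ => (0) + (2) * Sfn a x t' + ((-2) * x) * Sfn a x t' ^ 2 + (0) * Sfn a x t' ^ 3 + (0) * Sfn a x t' ^ 4) := by
    funext t'; ring
  rw [e, h.deriv]; ring
/-- The soliton solution `u = 2/cosh²X`, `y = 2(1 - x tanh X) tanh X` with
`X = x + 4t + a` solves systems (Dx), (Dt), with `H0 = -4` and `H1 = -16`. -/
theorem soliton_solution (a : ℝ) :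
    ∀ x t,
      DxEqAt (fun x t => 2 / (Real.cosh (x + 4 * t + a)) ^ 2)
        (fun x t => 2 * (1 - x * Real.tanh (x + 4 * t + a)) * Real.tanh (x + 4 * t + a)) x t ∧
      DtEqAt (fun x t => 2 / (Real.cosh (x + 4 * t + a)) ^ 2)
        (fun x t => 2 * (1 - x * Real.tanh (x + 4 * t + a)) * Real.tanh (x + 4 * t + a)) x t ∧
      H0expr (fun x t => 2 / (Real.cosh (x + 4 * t + a)) ^ 2)
        (fun x t => 2 * (1 - x * Real.tanh (x + 4 * t + a)) * Real.tanh (x + 4 * t + a)) x t = -4 ∧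
      H1expr (fun x t => 2 / (Real.cosh (x + 4 * t + a)) ^ 2)
        (fun x t => 2 * (1 - x * Real.tanh (x + 4 * t + a)) * Real.tanh (x + 4 * t + a)) x t = -16 :=  by
  intro x t
  have hU : (fun x t => 2 / (Real.cosh (x + 4 * t + a)) ^ 2)
      = (fun x t => 2 + (-2) * Sfn a x t ^ 2) := by
    funext x t
    have hc := (Real.cosh_pos (x + 4 * t + a)).ne'
    have hsq := Real.cosh_sq_sub_sinh_sq (x + 4 * t + a)
    simp only [Sfn, Real.tanh_eq_sinh_div_cosh]
    field_simp
    nlinarith [hsq]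
  have hY : (fun x t => 2 * (1 - x * Real.tanh (x + 4 * t + a)) * Real.tanh (x + 4 * t + a))
      = (fun x t => 2 * Sfn a x t + (-2) * x * Sfn a x t ^ 2) := by
    funext x t; simp only [Sfn]; ring
  have hZ : zfun (fun x t => 2 + (-2) * Sfn a x t ^ 2)
      (fun x t => 2 * Sfn a x t + (-2) * x * Sfn a x t ^ 2)
      = (fun x t => 2 * Sfn a x t + 24 * t + (-24) * t * Sfn a x t ^ 2 + 2 * x + (-2) * x * Sfn a x t ^ 2) := by
    funext x t; simp only [zfun]; ring
  rw [hU, hY]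
  simp only [DxEqAt, DtEqAt, H0expr, H1expr]
  rw [hZ, dlem1 a, dlem2 a, dlem3 a, dlem4 a, dlem5 a, dlem6 a, dlem7 a, dlem8 a,
    dlem9 a, dlem10 a]
  refine ⟨⟨by ring, by ring⟩, ⟨by ring, by ring⟩, by ring, by ring⟩
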